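/- For all real numbers h1, h2 with 0 < h1 ≤ h2 and every ρ ∈ [0, 1), the quantity h_ρ := (h1 + h2 − 2ρ·√(h1·h2))/(1 − ρ²) satisfies h_ρ ≥ h2. Moreover, if h1 < h2, then equality h_ρ = h2 holds if and only if ρ = √(h1/h2). -/

import Mathlib

/-- Minimization of the equivalent cooperative-channel gain
`h_ρ := (h1 + h2 − 2ρ√(h1h2))/(1 − ρ²)` over the noise correlation `ρ ∈ [0, 1)`:
it is always at least `h2`, and (when `h1 < h2`) equals `h2` iff `ρ = √(h1/h2)`. -/
theorem sato_hrho_min (h1 h2 : ℝ) (hh1 : 0 < h1) (h12 : h1 ≤ h2) :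
    ∀ ρ : ℝ, 0 ≤ ρ → ρ < 1 →
      h2 ≤ (h1 + h2 - 2 * ρ * Real.sqrt (h1 * h2)) / (1 - ρ ^ 2) ∧
      (h1 < h2 →
        ((h1 + h2 - 2 * ρ * Real.sqrt (h1 * h2)) / (1 - ρ ^ 2) = h2 ↔
          ρ = Real.sqrt (h1 / h2))) := by
  intro ρ hρ0 hρ1
  have hh2 : (0:ℝ) < h2 := lt_of_lt_of_le hh1 h12
  have hs1 : Real.sqrt h1 ^ 2 = h1 := Real.sq_sqrt hh1.le
  have hs2 : Real.sqrt h2 ^ 2 = h2 := Real.sq_sqrt hh2.le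
  have hs2pos : 0 < Real.sqrt h2 := Real.sqrt_pos.mpr hh2
  have hmul : Real.sqrt (h1 * h2) = Real.sqrt h1 * Real.sqrt h2 :=
    Real.sqrt_mul hh1.le h2
  have hd : (0:ℝ) < 1 - ρ ^ 2 := by nlinarith
  have key : h1 + h2 - 2 * ρ * Real.sqrt (h1 * h2)
      = h2 * (1 - ρ ^ 2) + (Real.sqrt h1 - ρ * Real.sqrt h2) ^ 2 := by
    rw [hmul]; nlinarith [hs1, hs2]
  have hform : (h1 + h2 - 2 * ρ * Real.sqrt (h1 * h2)) / (1 - ρ ^ 2)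
      = h2 + (Real.sqrt h1 - ρ * Real.sqrt h2) ^ 2 / (1 - ρ ^ 2) := by
    rw [key]; field_simp
  constructor
  · rw [hform]
    have : 0 ≤ (Real.sqrt h1 - ρ * Real.sqrt h2) ^ 2 / (1 - ρ ^ 2) :=
      div_nonneg (sq_nonneg _) hd.le
    linarith
  · intro _
    rw [hform]
    have hrt : Real.sqrt (h1 / h2) = Real.sqrt h1 / Real.sqrt h2 :=
      Real.sqrt_div hh1.le h2
    constructor
    · intro h
      have h0 : (Real.sqrt h1 - ρ * Real.sqrt h2) ^ 2 / (1 - ρ ^ 2) = 0 := by linarith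
      have h2' : Real.sqrt h1 = ρ * Real.sqrt h2 := by
        field_simp at h0; nlinarith [h0]
      rw [hrt, h2']
      field_simp
    · intro h
      have : Real.sqrt h1 - ρ * Real.sqrt h2 = 0 := by
        rw [h, hrt]; field_simp; ring
      rw [this]
      simp
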